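/- For a density matrix ρ, Hermitian H, and α ∈ [0,1], one has the chain of inequalities I_{ρ,α}(H) ≤ I_ρ(H) ≤ J_ρ(H) ≤ J_{ρ,α}(H), where I_ρ = I_{ρ,1/2} and J_ρ = J_{ρ,1/2}. -/
import Mathlib


open Matrix ComplexOrder

/-- The real power of a positive semidefinite matrix, defined via the
continuous functional calculus (spectral decomposition). -/
noncomputable def mpow {n : Type*} [Fintype n] [DecidableEq n]
    (ρ : Matrix n n ℂ) (hρ : ρ.PosSemidef) (α : ℝ) : Matrix n n ℂ :=
  hρ.1.cfc (fun x : ℝ => x ^ α)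

lemma amgm_aux {a b β : ℝ} (ha : 0 ≤ a) (hb : 0 ≤ b) :
    2 * (a ^ (1/2:ℝ) * b ^ (1/2:ℝ)) ≤ a ^ β * b ^ (1-β) + a ^ (1-β) * b ^ β := by
  have hab : ∀ x : ℝ, 0 ≤ x → x ^ β * x ^ (1-β) = x := by
    intro x hx
    rw [← Real.rpow_add' hx (by norm_num : β + (1-β) ≠ 0)]
    norm_num
  have hx : 0 ≤ a ^ β * b ^ (1-β) :=
    mul_nonneg (Real.rpow_nonneg ha β) (Real.rpow_nonneg hb _)
  have hy : 0 ≤ a ^ (1-β) * b ^ β :=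
    mul_nonneg (Real.rpow_nonneg ha _) (Real.rpow_nonneg hb β)
  have hxy : (a ^ β * b ^ (1-β)) * (a ^ (1-β) * b ^ β) = a * b := by
    rw [mul_mul_mul_comm, hab a ha, mul_comm (b^(1-β)), hab b hb]
  have h2 := two_mul_le_add_sq (Real.sqrt (a ^ β * b ^ (1-β))) (Real.sqrt (a ^ (1-β) * b ^ β))
  rw [Real.sq_sqrt hx, Real.sq_sqrt hy, mul_assoc, ← Real.sqrt_mul hx, hxy, Real.sqrt_mul ha,
    Real.sqrt_eq_rpow, Real.sqrt_eq_rpow] at h2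
  linarith

lemma trace_conj_diag {n : Type*} [Fintype n] [DecidableEq n]
    (U M : Matrix n n ℂ) (d₁ d₂ : n → ℂ) :
    (U * diagonal d₁ * star U * M * (U * diagonal d₂ * star U) * M).trace
      = ∑ i, ∑ j, d₁ i * d₂ j * ((star U * M * U) i j * (star U * M * U) j i) := by
  have h1 : U * diagonal d₁ * star U * M * (U * diagonal d₂ * star U) * M
      = U * (diagonal d₁ * ((star U * M * U) * (diagonal d₂ * (star U * M)))) := by
    simp only [mul_assoc]
  rw [h1, trace_mul_comm]
  have h2 : diagonal d₁ * ((star U * M * U) * (diagonal d₂ * (star U * M))) * U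
      = diagonal d₁ * (star U * M * U) * diagonal d₂ * (star U * M * U) := by
    simp only [mul_assoc]
  rw [h2]
  generalize star U * M * U = B
  simp only [Matrix.trace, Matrix.diag_apply, Matrix.mul_apply, Matrix.mul_diagonal,
    Matrix.diagonal_mul]
  refine Finset.sum_congr rfl fun i _ => Finset.sum_congr rfl fun j _ => ?_
  simp only [Matrix.diagonal_apply, ite_mul, mul_ite, zero_mul, mul_zero,
    Finset.sum_ite_eq, Finset.sum_ite_eq', Finset.mem_univ, if_true]
  ring

theorem stmt10 {n : Type*} [Fintype n] [DecidableEq n]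
    (ρ : Matrix n n ℂ) (hρ : ρ.PosSemidef) (htr : ρ.trace = 1)
    (H : Matrix n n ℂ) (hH : H.IsHermitian)
    (α : ℝ) (hα : α ∈ Set.Icc (0:ℝ) 1) :
    let H₀ := H - (ρ * H).trace • (1 : Matrix n n ℂ)
    let I' : ℝ → ℂ := fun β =>
      (ρ * H₀ ^ 2).trace - (mpow ρ hρ β * H₀ * mpow ρ hρ (1-β) * H₀).trace
    let J' : ℝ → ℂ := fun β =>
      (ρ * H₀ ^ 2).trace + (mpow ρ hρ β * H₀ * mpow ρ hρ (1-β) * H₀).trace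
    I' α ≤ I' (1/2) ∧ I' (1/2) ≤ J' (1/2) ∧ J' (1/2) ≤ J' α := by
  intro H₀ I' J'
  have hctr : (starRingEnd ℂ) ((ρ * H).trace) = (ρ * H).trace := by
    have : ((ρ * H)ᴴ).trace = star ((ρ * H).trace) := trace_conjTranspose (ρ * H)
    rw [conjTranspose_mul, hρ.1, hH, trace_mul_comm] at this
    exact this.symm
  have hH₀ : H₀.IsHermitian := by
    have hd : H₀ = H - (ρ * H).trace • (1 : Matrix n n ℂ) := rfl
    rw [Matrix.IsHermitian, hd, conjTranspose_sub, hH.eq, conjTranspose_smul,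
      conjTranspose_one, Complex.star_def, hctr]
  set U : Matrix n n ℂ := (hρ.1.eigenvectorUnitary : Matrix n n ℂ) with hUdef
  have hUU' : U * star U = 1 := by
    rw [hUdef]
    exact mem_unitaryGroup_iff.mp (IsHermitian.eigenvectorUnitary hρ.1).2
  set lam : n → ℝ := hρ.1.eigenvalues with hlamdef
  have hlam : ∀ i, 0 ≤ lam i := fun i => hρ.eigenvalues_nonneg i
  set B : Matrix n n ℂ := star U * H₀ * U with hBdef
  have hB : ∀ i j, B j i = (starRingEnd ℂ) (B i j) := by
    intro i j
    have hBH : B.IsHermitian := by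
      rw [Matrix.IsHermitian, hBdef, conjTranspose_mul, conjTranspose_mul, hH₀.eq,
        ← star_eq_conjTranspose, ← star_eq_conjTranspose, star_star, mul_assoc]
    conv_lhs => rw [← hBH.eq]
    rw [conjTranspose_apply, Complex.star_def]
  set c : n → n → ℝ := fun i j => Complex.normSq (B i j) with hcdef
  have hcnn : ∀ i j, 0 ≤ c i j := fun i j => Complex.normSq_nonneg _
  have hcsymm : ∀ i j, c i j = c j i := by
    intro i j
    simp only [hcdef, hB i j, Complex.normSq_conj]
  set T : ℝ → ℝ := fun β => ∑ i, ∑ j, lam i ^ β * lam j ^ (1-β) * c i j with hTdef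
  have hT : ∀ β : ℝ, T β = ∑ i, ∑ j, lam i ^ β * lam j ^ (1-β) * c i j := fun β => rfl
  have hc : ∀ i j, c i j = Complex.normSq (B i j) := fun i j => rfl
  -- trace formula for mpow
  have hmpow : ∀ γ : ℝ, mpow ρ hρ γ
      = U * diagonal (Complex.ofReal ∘ (fun x : ℝ => x ^ γ) ∘ lam) * star U := by
    intro γ; rw [mpow, Matrix.IsHermitian.cfc]; rfl
  have key : ∀ β : ℝ, (mpow ρ hρ β * H₀ * mpow ρ hρ (1-β) * H₀).trace = (T β : ℂ) := by
    intro β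
    rw [hmpow, hmpow, trace_conj_diag U H₀, hT β]
    push_cast
    refine Finset.sum_congr rfl fun i _ => Finset.sum_congr rfl fun j _ => ?_
    rw [← hBdef, hB i j, Complex.mul_conj, hc i j]
    rfl
  have hρeq : ρ = U * diagonal (Complex.ofReal ∘ lam) * star U := hρ.1.spectral_theorem
  have mpow1 : mpow ρ hρ 1 = ρ := by
    have hfun1 : Complex.ofReal ∘ (fun x : ℝ => x ^ (1:ℝ)) ∘ lam = Complex.ofReal ∘ lam := by
      funext i; simp [Real.rpow_one]
    rw [hmpow, hfun1, ← hρeq]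
  have mpow0 : mpow ρ hρ 0 = 1 := by
    have hfun : Complex.ofReal ∘ (fun x : ℝ => x ^ (0:ℝ)) ∘ lam = fun _ => 1 := by
      funext i; simp [Real.rpow_zero]
    rw [hmpow, hfun, diagonal_one, mul_one, hUU']
  have key1 : (ρ * H₀ ^ 2).trace = (T 1 : ℂ) := by
    have heq : ρ * H₀ ^ 2 = mpow ρ hρ 1 * H₀ * mpow ρ hρ (1 - 1) * H₀ := by
      rw [show (1-1:ℝ) = 0 by norm_num, mpow0, mpow1, sq]
      noncomm_ring
    rw [heq]
    exact key 1
  -- symmetry of T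
  have hswap : ∀ β : ℝ, T β = ∑ i, ∑ j, lam i ^ (1-β) * lam j ^ β * c i j := by
    intro β
    rw [hT β, Finset.sum_comm]
    refine Finset.sum_congr rfl fun i _ => Finset.sum_congr rfl fun j _ => ?_
    rw [hcsymm j i]
    ring
  -- main inequality
  have hmain : ∀ β : ℝ, T (1/2) ≤ T β := by
    intro β
    have h2 : 2 * T (1/2) ≤ T β + T β := by
      have e1 : T β + T β = ∑ i, ∑ j, (lam i ^ β * lam j ^ (1-β)
          + lam i ^ (1-β) * lam j ^ β) * c i j := by
        calc T β + T β
            = (∑ i, ∑ j, lam i ^ β * lam j ^ (1-β) * c i j)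
              + (∑ i, ∑ j, lam i ^ (1-β) * lam j ^ β * c i j) := by
              rw [← hT β, ← hswap β]
          _ = _ := by
              rw [← Finset.sum_add_distrib]
              refine Finset.sum_congr rfl fun i _ => ?_
              rw [← Finset.sum_add_distrib]
              refine Finset.sum_congr rfl fun j _ => ?_
              ring
      have e2 : 2 * T (1/2) = ∑ i, ∑ j,
          (2 * (lam i ^ (1/2:ℝ) * lam j ^ (1/2:ℝ))) * c i j := by
        rw [hT (1/2), Finset.mul_sum]
        refine Finset.sum_congr rfl fun i _ => ?_
        rw [Finset.mul_sum]
        refine Finset.sum_congr rfl fun j _ => ?_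
        rw [show (1 - 1/2 : ℝ) = 1/2 by norm_num]
        ring
      rw [e1, e2]
      refine Finset.sum_le_sum fun i _ => Finset.sum_le_sum fun j _ => ?_
      exact mul_le_mul_of_nonneg_right (amgm_aux (hlam i) (hlam j)) (hcnn i j)
    linarith
  have hpos : 0 ≤ T (1/2) := by
    rw [hT (1/2)]
    refine Finset.sum_nonneg fun i _ => Finset.sum_nonneg fun j _ => ?_
    exact mul_nonneg (mul_nonneg (Real.rpow_nonneg (hlam i) _)
      (Real.rpow_nonneg (hlam j) _)) (hcnn i j)
  refine ⟨?_, ?_, ?_⟩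
  · simp only [I']
    rw [key, key, key1, ← Complex.ofReal_sub, ← Complex.ofReal_sub, Complex.real_le_real]
    linarith [hmain α]
  · simp only [I', J']
    rw [key, key1, ← Complex.ofReal_sub, ← Complex.ofReal_add, Complex.real_le_real]
    linarith [hpos]
  · simp only [J']
    rw [key, key, key1, ← Complex.ofReal_add, ← Complex.ofReal_add, Complex.real_le_real]
    linarith [hmain α]
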